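/- Let I be a nonzero saturated monomial ideal of ℂ[x_0,x_1,x_2]. Then the set {a ∈ ℤ_{≥0}^3 : x^a ∉ I} of exponent vectors of monomials not in I is a finite (possibly empty) union of rays and quadrants. -/

import Mathlib

open MvPolynomial

/-- The Hilbert function of an ideal `I ⊆ ℂ[x_0,…,x_{n-1}]`: the dimension over `ℂ` of the
degree-`d` graded piece of the quotient ring. -/
noncomputable def hilbertFn (n : ℕ) (I : Ideal (MvPolynomial (Fin n) ℂ)) (d : ℕ) : ℕ :=
  Module.finrank ℂ
    ((homogeneousSubmodule (Fin n) ℂ d) ⧸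
      (Submodule.comap (homogeneousSubmodule (Fin n) ℂ d).subtype
        (Submodule.restrictScalars ℂ I)))

/-- A monomial ideal: an ideal generated by monomials. -/
def IsMonomialIdeal {n : ℕ} (I : Ideal (MvPolynomial (Fin n) ℂ)) : Prop :=
  ∃ S : Set (Fin n →₀ ℕ), I = Ideal.span ((fun a => monomial a (1 : ℂ)) '' S)

/-- A homogeneous ideal `I` is saturated if for every homogeneous `f`, whenever `x_i * f ∈ I`
for all variables `x_i`, one has `f ∈ I`. -/
def IsSaturatedIdeal {n : ℕ} (I : Ideal (MvPolynomial (Fin n) ℂ)) : Prop :=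
  ∀ f : MvPolynomial (Fin n) ℂ, (∃ d, f.IsHomogeneous d) →
    (∀ i : Fin n, X i * f ∈ I) → f ∈ I

/-- `I` has Hilbert polynomial `p` if its Hilbert function agrees with `p` for all
sufficiently large degrees. -/
def HasHilbertPoly {n : ℕ} (I : Ideal (MvPolynomial (Fin n) ℂ)) (p : Polynomial ℚ) : Prop :=
  ∃ N : ℕ, ∀ d : ℕ, N ≤ d → (hilbertFn n I d : ℚ) = p.eval (d : ℚ)

/-- `I`'s Hilbert function eventually agrees with the function `p`. -/
def HasHilbertFun {n : ℕ} (I : Ideal (MvPolynomial (Fin n) ℂ)) (p : ℕ → ℕ) : Prop :=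
  ∃ N : ℕ, ∀ d : ℕ, N ≤ d → hilbertFn n I d = p d

/-- The value at `d` of the Hilbert polynomial `p_λ` attached to a partition
`λ = (λ_1, …, λ_r)` (given as a list): `p_λ(d) = Σ_{i=1}^r C(d + λ_i − i, λ_i − 1)`.
(For `d ≥ r` the truncated subtraction agrees with the true polynomial value.) -/
def partitionPoly (L : List ℕ) (d : ℕ) : ℕ :=
  ∑ i : Fin L.length, Nat.choose (d + L.get i - (i.val + 1)) (L.get i - 1)

/-- A `k`-orthant in `ℤ_{≥0}^m`: the set of lattice points with `m − k` coordinates fixed. -/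
def IsOrthant (m k : ℕ) (K : Set (Fin m →₀ ℕ)) : Prop :=
  ∃ (S : Finset (Fin m)) (c : Fin m → ℕ), S.card = m - k ∧
    K = {a : Fin m →₀ ℕ | ∀ i ∈ S, a i = c i}

section AuxComb
open Finsupp

private def sum3 (x : Fin 3 →₀ ℕ) : ℕ := ∑ i, x i

private lemma sum3_eq (x : Fin 3 →₀ ℕ) : sum3 x = x 0 + x 1 + x 2 := by
  simp [sum3, Fin.sum_univ_three]

private lemma coord_le_sum3 (x : Fin 3 →₀ ℕ) (l : Fin 3) : x l ≤ sum3 x :=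
  Finset.single_le_sum (fun _ _ => Nat.zero_le _) (Finset.mem_univ l)

private lemma sum3_add (x y : Fin 3 →₀ ℕ) : sum3 (x + y) = sum3 x + sum3 y := by
  simp [sum3_eq, Finsupp.add_apply]; ring

private lemma sum3_single (i : Fin 3) : sum3 (Finsupp.single i 1) = 1 := by
  fin_cases i <;> simp [sum3_eq, Finsupp.single_apply]

private lemma sum3_lt_of_lt {x y : Fin 3 →₀ ℕ} (hle : x ≤ y) (hne : x ≠ y) :
    sum3 x < sum3 y := by
  have : ∃ l, x l ≠ y l := by
    by_contra h; push_neg at h; exact hne (Finsupp.ext h)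
  obtain ⟨l, hl⟩ := this
  exact Finset.sum_lt_sum (fun i _ => hle i) ⟨l, Finset.mem_univ l, lt_of_le_of_ne (hle l) hl⟩

private lemma fin3_facts : ∀ i : Fin 3, i + 1 ≠ i ∧ i + 2 ≠ i ∧ i + 1 ≠ i + 2 ∧
    ∀ l : Fin 3, l = i ∨ l = i + 1 ∨ l = i + 2 := by decide

private lemma combinat (C : Set (Fin 3 →₀ ℕ))
    (hlow : ∀ x y : Fin 3 →₀ ℕ, x ≤ y → y ∈ C → x ∈ C)
    (hstep : ∀ x ∈ C, ∃ i : Fin 3, x + Finsupp.single i 1 ∈ C)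
    (hnefull : ∃ g, g ∉ C) :
    ∃ 𝒞 : Finset (Set (Fin 3 →₀ ℕ)),
      (∀ K ∈ 𝒞, IsOrthant 3 1 K ∨ IsOrthant 3 2 K) ∧
      C = ⋃₀ (𝒞 : Set (Set (Fin 3 →₀ ℕ))) := by
  classical
  -- the complement and its minimal elements
  set E : Set (Fin 3 →₀ ℕ) := {x | x ∉ C} with hE
  set M : Set (Fin 3 →₀ ℕ) := {m | m ∈ E ∧ ∀ y ∈ E, y ≤ m → y = m} with hM
  have hManti : IsAntichain (· ≤ ·) M := by
    intro x hx y hy hxy hle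
    exact hxy (hy.2 x hx.1 hle)
  have hMfin : M.Finite := hManti.finite_of_partiallyWellOrderedOn (Set.isPWO_of_wellQuasiOrderedLE M)
  have hmin : ∀ n (x : Fin 3 →₀ ℕ), sum3 x ≤ n → x ∈ E → ∃ m ∈ M, m ≤ x := by
    intro n
    induction n with
    | zero =>
      intro x hx hxE
      by_cases hxM : x ∈ M
      · exact ⟨x, hxM, le_refl x⟩
      · simp only [hM, Set.mem_setOf_eq] at hxM
        push_neg at hxM
        obtain ⟨y, hyE, hyle, hyne⟩ := hxM hxE
        have := sum3_lt_of_lt hyle hyne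
        omega
    | succ n ih =>
      intro x hx hxE
      by_cases hxM : x ∈ M
      · exact ⟨x, hxM, le_refl x⟩
      · simp only [hM, Set.mem_setOf_eq] at hxM
        push_neg at hxM
        obtain ⟨y, hyE, hyle, hyne⟩ := hxM hxE
        have hlt := sum3_lt_of_lt hyle hyne
        obtain ⟨m, hmM, hmy⟩ := ih y (by omega) hyE
        exact ⟨m, hmM, le_trans hmy hyle⟩
  set N : ℕ := hMfin.toFinset.sup sum3 + 1 with hN
  have hN0 : 0 < N := Nat.succ_pos _
  have hMlt : ∀ m ∈ M, ∀ l, m l < N := by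
    intro m hm l
    have h1 : sum3 m ≤ hMfin.toFinset.sup sum3 := Finset.le_sup (hMfin.mem_toFinset.2 hm)
    have := coord_le_sum3 m l
    omega
  have hGE : ∀ x ∈ E, ∃ m, m ∈ E ∧ m ≤ x ∧ ∀ l, m l < N := by
    intro x hx
    obtain ⟨m, hmM, hmx⟩ := hmin (sum3 x) x le_rfl hx
    exact ⟨m, hmM.1, hmx, hMlt m hmM⟩
  obtain ⟨gg, hgg⟩ := hnefull
  obtain ⟨g0, hg0E, _, hg0lt⟩ := hGE gg hgg
  -- every element of C lies on a full ray inside C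
  have hray : ∀ a ∈ C, ∃ i : Fin 3,
      ∀ x : Fin 3 →₀ ℕ, (∀ l, l ≠ i → x l = a l) → x ∈ C := by
    intro a ha
    let f : ℕ → {x : Fin 3 →₀ ℕ // x ∈ C} := fun t =>
      Nat.rec ⟨a, ha⟩ (fun _ p =>
        ⟨p.1 + Finsupp.single (hstep p.1 p.2).choose 1, (hstep p.1 p.2).choose_spec⟩) t
    have hf0 : (f 0).1 = a := rfl
    have hfsucc : ∀ t, ∃ i, (f (t + 1)).1 = (f t).1 + Finsupp.single i 1 := fun t => ⟨_, rfl⟩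
    have hmono : ∀ s t, s ≤ t → (f s).1 ≤ (f t).1 := by
      have h1 : ∀ t, (f t).1 ≤ (f (t + 1)).1 := by
        intro t
        obtain ⟨i, hi⟩ := hfsucc t
        rw [hi, Finsupp.le_def]
        intro l
        simp [Finsupp.add_apply]
      intro s t hst
      exact monotone_nat_of_le_succ h1 hst
    have hsum : ∀ t, sum3 (f t).1 = sum3 a + t := by
      intro t
      induction t with
      | zero => simp [hf0]
      | succ t ih =>
        obtain ⟨i, hi⟩ := hfsucc t
        rw [hi, sum3_add, sum3_single, ih]; omega
    have hunb : ∃ i : Fin 3, ∀ Mv : ℕ, ∃ t, Mv ≤ (f t).1 i := by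
      by_contra h
      push_neg at h
      obtain ⟨M0, h0⟩ := h 0
      obtain ⟨M1, h1⟩ := h 1
      obtain ⟨M2, h2⟩ := h 2
      set t := M0 + M1 + M2 with ht
      have hs := hsum t
      rw [sum3_eq] at hs
      have c0 := h0 t; have c1 := h1 t; have c2 := h2 t
      omega
    obtain ⟨i, hi⟩ := hunb
    refine ⟨i, fun x hx => ?_⟩
    obtain ⟨t, ht⟩ := hi (x i)
    have hle : x ≤ (f t).1 := by
      rw [Finsupp.le_def]
      intro l
      by_cases hl : l = i
      · subst hl; exact ht
      · rw [hx l hl, ← hf0]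
        exact hmono 0 t (Nat.zero_le t) l
    exact hlow x (f t).1 hle (f t).2
  -- the finite family
  let Kf : Finset (Fin 3) × (Fin 3 → Fin N) → Set (Fin 3 →₀ ℕ) := fun p =>
    {x | ∀ l ∈ p.1, x l = (p.2 l : ℕ)}
  let 𝒞 : Finset (Set (Fin 3 →₀ ℕ)) :=
    (Finset.univ.filter (fun p : Finset (Fin 3) × (Fin 3 → Fin N) =>
      (p.1.card = 1 ∨ p.1.card = 2) ∧ Kf p ⊆ C)).image Kf
  refine ⟨𝒞, ?_, ?_⟩
  · intro K hK
    simp only [𝒞, Finset.mem_image, Finset.mem_filter] at hK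
    obtain ⟨p, ⟨-, hcard, -⟩, hKp⟩ := hK
    rcases hcard with h1 | h2
    · exact Or.inr ⟨p.1, fun l => (p.2 l : ℕ), by simpa using h1, hKp.symm⟩
    · exact Or.inl ⟨p.1, fun l => (p.2 l : ℕ), by simpa using h2, hKp.symm⟩
  · ext a
    simp only [Set.mem_sUnion, Finset.mem_coe, 𝒞, Finset.mem_image, Finset.mem_filter,
      Finset.mem_univ, true_and]
    constructor
    · intro ha
      obtain ⟨i, hi⟩ := hray a ha
      obtain ⟨hji, hki, hjk, hcover⟩ := fin3_facts i
      set j := i + 1 with hj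
      set k := i + 2 with hk
      let cfun : Fin 3 → Fin N := fun l => if h : a l < N then ⟨a l, h⟩ else ⟨0, hN0⟩
      by_cases hjN : N ≤ a j
      · -- quadrant fixing coordinate k
        have hQ : ∀ x : Fin 3 →₀ ℕ, x k = a k → x ∈ C := by
          intro x hxk
          by_contra hxC
          obtain ⟨m, hmE, hmx, hmN⟩ := hGE x hxC
          set y := Finsupp.update a i (x i) with hy
          have hya : ∀ l, l ≠ i → y l = a l := by
            intro l hl
            simp [hy, Finsupp.coe_update, Function.update_of_ne hl]
          have hyC : y ∈ C := hi y hya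
          have hmy : m ≤ y := by
            rw [Finsupp.le_def]
            intro l
            rcases hcover l with rfl | rfl | rfl
            · have : y l = x l := by simp [hy, Finsupp.coe_update]
              rw [this]; exact hmx l
            · rw [hya _ hji]
              have := hmN j
              omega
            · rw [hya _ hki, ← hxk]
              exact hmx _
          exact hmE (hlow m y hmy hyC)
        have hakN : a k < N := by
          by_contra hak
          push_neg at hak
          set y := Finsupp.update a i (g0 i) with hy
          have hya : ∀ l, l ≠ i → y l = a l := by
            intro l hl
            simp [hy, Finsupp.coe_update, Function.update_of_ne hl]
          have hyC : y ∈ C := hi y hya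
          have hg0y : g0 ≤ y := by
            rw [Finsupp.le_def]
            intro l
            rcases hcover l with rfl | rfl | rfl
            · simp [hy, Finsupp.coe_update]
            · rw [hya _ hji]; have := hg0lt j; omega
            · rw [hya _ hki]; have := hg0lt k; omega
          exact hg0E (hlow g0 y hg0y hyC)
        refine ⟨Kf ({k}, cfun), ⟨({k}, cfun), ⟨⟨Or.inl (Finset.card_singleton k), ?_⟩, rfl⟩⟩, ?_⟩
        · intro x hx
          simp only [Kf, Set.mem_setOf_eq, Finset.mem_singleton, forall_eq] at hx
          refine hQ x ?_
          rw [hx]; simp [cfun, dif_pos hakN]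
        · simp only [Kf, Set.mem_setOf_eq, Finset.mem_singleton, forall_eq]
          simp [cfun, dif_pos hakN]
      · push_neg at hjN
        by_cases hkN : N ≤ a k
        · -- quadrant fixing coordinate j
          have hQ : ∀ x : Fin 3 →₀ ℕ, x j = a j → x ∈ C := by
            intro x hxj
            by_contra hxC
            obtain ⟨m, hmE, hmx, hmN⟩ := hGE x hxC
            set y := Finsupp.update a i (x i) with hy
            have hya : ∀ l, l ≠ i → y l = a l := by
              intro l hl
              simp [hy, Finsupp.coe_update, Function.update_of_ne hl]
            have hyC : y ∈ C := hi y hya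
            have hmy : m ≤ y := by
              rw [Finsupp.le_def]
              intro l
              rcases hcover l with rfl | rfl | rfl
              · have : y l = x l := by simp [hy, Finsupp.coe_update]
                rw [this]; exact hmx l
              · rw [hya _ hji, ← hxj]; exact hmx _
              · rw [hya _ hki]
                have := hmN k
                omega
            exact hmE (hlow m y hmy hyC)
          refine ⟨Kf ({j}, cfun), ⟨({j}, cfun), ⟨⟨Or.inl (Finset.card_singleton j), ?_⟩, rfl⟩⟩, ?_⟩
          · intro x hx
            simp only [Kf, Set.mem_setOf_eq, Finset.mem_singleton, forall_eq] at hx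
            refine hQ x ?_
            rw [hx]; simp [cfun, dif_pos hjN]
          · simp only [Kf, Set.mem_setOf_eq, Finset.mem_singleton, forall_eq]
            simp [cfun, dif_pos hjN]
        · push_neg at hkN
          -- ray through a in direction i
          refine ⟨Kf ({j, k}, cfun), ⟨({j, k}, cfun), ⟨⟨Or.inr (Finset.card_pair hjk), ?_⟩, rfl⟩⟩, ?_⟩
          · intro x hx
            simp only [Kf, Set.mem_setOf_eq, Finset.mem_insert, Finset.mem_singleton] at hx
            refine hi x fun l hl => ?_
            rcases hcover l with rfl | rfl | rfl
            · exact absurd rfl hl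
            · rw [hx j (Or.inl rfl)]; simp [cfun, dif_pos hjN]
            · rw [hx k (Or.inr rfl)]; simp [cfun, dif_pos hkN]
          · intro l hl
            simp only [Finset.mem_insert, Finset.mem_singleton] at hl
            rcases hl with rfl | rfl
            · simp [cfun, dif_pos hjN]
            · simp [cfun, dif_pos hkN]
    · rintro ⟨K, ⟨p, ⟨⟨-, hsub⟩, rfl⟩⟩, haK⟩
      exact hsub haK

end AuxComb


attribute [local instance] MvPolynomial.gradedAlgebra

/-- A homogeneous ideal. -/
def IsHomogeneousIdeal {n : ℕ} (I : Ideal (MvPolynomial (Fin n) ℂ)) : Prop :=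
  Ideal.IsHomogeneous (homogeneousSubmodule (Fin n) ℂ) I

/-- For a nonzero saturated monomial ideal `I ⊆ ℂ[x_0,x_1,x_2]`, the set of
exponent vectors of monomials not in `I` is a finite union of rays and quadrants. -/
theorem statement4 (I : Ideal (MvPolynomial (Fin 3) ℂ)) (hmon : IsMonomialIdeal I)
    (hsat : IsSaturatedIdeal I) (hne : I ≠ ⊥) :
    ∃ 𝒞 : Finset (Set (Fin 3 →₀ ℕ)),
      (∀ K ∈ 𝒞, IsOrthant 3 1 K ∨ IsOrthant 3 2 K) ∧
      {a : Fin 3 →₀ ℕ | monomial a (1 : ℂ) ∉ I} = ⋃₀ (𝒞 : Set (Set (Fin 3 →₀ ℕ))) := by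
  classical
  set C : Set (Fin 3 →₀ ℕ) := {a | monomial a (1 : ℂ) ∉ I} with hC
  have hlow : ∀ x y : Fin 3 →₀ ℕ, x ≤ y → y ∈ C → x ∈ C := by
    intro x y hxy hy
    simp only [hC, Set.mem_setOf_eq] at hy ⊢
    intro hx
    apply hy
    have h2 : monomial (y - x) (1 : ℂ) * monomial x 1 = monomial y 1 := by
      rw [monomial_mul, tsub_add_cancel_of_le hxy, one_mul]
    rw [← h2]
    exact Ideal.mul_mem_left _ _ hx
  have hstep : ∀ a ∈ C, ∃ i : Fin 3, a + Finsupp.single i 1 ∈ C := by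
    intro a ha
    by_contra h
    push_neg at h
    simp only [hC, Set.mem_setOf_eq, not_not] at h
    apply ha
    refine hsat (monomial a 1) ⟨a.degree, isHomogeneous_monomial 1 rfl⟩ fun i => ?_
    have hx : (X i : MvPolynomial (Fin 3) ℂ) = monomial (Finsupp.single i 1) 1 := by
      rw [← X_pow_eq_monomial, pow_one]
    rw [hx, monomial_mul, one_mul, add_comm]
    exact h i
  have hne' : ∃ g : Fin 3 →₀ ℕ, g ∉ C := by
    obtain ⟨S, hS⟩ := hmon
    rcases S.eq_empty_or_nonempty with rfl | ⟨s, hs⟩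
    · exact absurd (by simp [hS]) hne
    · refine ⟨s, ?_⟩
      simp only [hC, Set.mem_setOf_eq, not_not]
      exact hS ▸ Ideal.subset_span ⟨s, hs, rfl⟩
  exact combinat C hlow hstep hne'
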